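/- arXiv:2310.20571 — 3 statements merged into one kernel-verified Lean document; each statement's English description precedes it below -/
import Mathlib

section
/- Every descent-preserving poset isomorphism f between two left weak Bruhat intervals I₁ and I₂ in S_n is a colored digraph isomorphism: for γ, γ' ∈ I₁ and 1 ≤ i ≤ n-1, γ' = s_iγ with γ ≤_L γ' holds if and only if f(γ') = s_i f(γ) with f(γ) ≤_L f(γ'). -/
/-- The left inversion set `Inv_L(σ) = {(i,j) : i < j, σ(i) > σ(j)}`. -/
def InvL {n : ℕ} (σ : Equiv.Perm (Fin n)) : Set (Fin n × Fin n) :=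
  {p | p.1 < p.2 ∧ σ p.2 < σ p.1}

/-- The left weak Bruhat order: `σ ≤_L ρ` iff `Inv_L(σ) ⊆ Inv_L(ρ)`. -/
def lLE {n : ℕ} (σ ρ : Equiv.Perm (Fin n)) : Prop := InvL σ ⊆ InvL ρ

/-- The right inversion set `Inv_R(σ) = {(σ(i),σ(j)) : i < j, σ(i) > σ(j)}`. -/
def InvR {n : ℕ} (σ : Equiv.Perm (Fin n)) : Set (Fin n × Fin n) :=
  {p | p.2 < p.1 ∧ σ⁻¹ p.1 < σ⁻¹ p.2}

/-- The right weak Bruhat order: `σ ≤_R ρ` iff `Inv_R(σ) ⊆ Inv_R(ρ)`. -/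
def rLE {n : ℕ} (σ ρ : Equiv.Perm (Fin n)) : Prop := InvR σ ⊆ InvR ρ

/-- The left weak Bruhat interval `[σ, ρ]_L`. -/
def lInterval {n : ℕ} (σ ρ : Equiv.Perm (Fin n)) : Set (Equiv.Perm (Fin n)) :=
  {γ | lLE σ γ ∧ lLE γ ρ}

/-- The right weak Bruhat interval `[σ, ρ]_R`. -/
def rInterval {n : ℕ} (σ ρ : Equiv.Perm (Fin n)) : Set (Equiv.Perm (Fin n)) :=
  {γ | rLE σ γ ∧ rLE γ ρ}

/-- The Coxeter length of a permutation, i.e. its number of inversions. -/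
def len {n : ℕ} (σ : Equiv.Perm (Fin n)) : ℕ :=
  (Finset.univ.filter fun p : Fin n × Fin n => p.1 < p.2 ∧ σ p.2 < σ p.1).card

/-- The simple transposition `s_i` (swapping the adjacent values `i`, `i+1`). -/
def sgen {n : ℕ} (i : Fin n) : Equiv.Perm (Fin (n + 1)) :=
  Equiv.swap i.castSucc i.succ

/-- The left descent set `Des_L(σ) = {i : ℓ(s_i σ) < ℓ(σ)}`. -/
def DesL {n : ℕ} (σ : Equiv.Perm (Fin (n + 1))) : Set (Fin n) :=
  {i | len (sgen i * σ) < len σ}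

theorem Equiv.apply_inv_self {α : Type*} (e : Equiv.Perm α) (x : α) : e (e⁻¹ x) = x :=
  e.apply_symm_apply x

theorem Equiv.Perm.apply_inv_self {α : Type*} (e : Equiv.Perm α) (x : α) : e (e⁻¹ x) = x :=
  e.apply_symm_apply x

namespace DPaux

lemma perm_strictMono_eq_one {m : ℕ} {w : Equiv.Perm (Fin m)} (h : StrictMono ⇑w) : w = 1 := by
  have inst : WellFoundedLT (Fin m) := inferInstance
  have hid : ⇑w = id := (@StrictMono.range_inj (Fin m) (Fin m) _ _ inst _ _ h strictMono_id).1
    (by rw [w.surjective.range_eq, Set.range_id])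
  exact Equiv.ext fun k => congrFun hid k

lemma swap_lt_swap {m : ℕ} {c d : Fin m} (hd : (d : ℕ) = (c : ℕ) + 1) (x y : Fin m) :
    Equiv.swap c d x < Equiv.swap c d y ↔
      (if (x = c ∧ y = d) ∨ (x = d ∧ y = c) then y < x else x < y) := by
  have happ : ∀ z : Fin m, ((Equiv.swap c d z : Fin m) : ℕ) =
      if (z : ℕ) = (c : ℕ) then (d : ℕ) else if (z : ℕ) = (d : ℕ) then (c : ℕ) else (z : ℕ) := by
    intro z
    rcases eq_or_ne z c with rfl | h1
    · simp
    · rcases eq_or_ne z d with rfl | h2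
      · have : (z : ℕ) ≠ (c : ℕ) := fun h => h1 (Fin.ext h)
        simp [this]
      · have e1 : (z : ℕ) ≠ (c : ℕ) := fun h => h1 (Fin.ext h)
        have e2 : (z : ℕ) ≠ (d : ℕ) := fun h => h2 (Fin.ext h)
        simp [Equiv.swap_apply_of_ne_of_ne h1 h2, e1, e2]
  rw [Fin.lt_def, happ, happ]
  simp only [Fin.lt_def, Fin.ext_iff]
  split_ifs <;> omega

variable {n : ℕ}

lemma apply_inv_ne {σ : Equiv.Perm (Fin (n+1))} {i : Fin n} :
    σ⁻¹ i.castSucc ≠ σ⁻¹ i.succ := by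
  intro h
  have := congrArg σ h
  simp only [Equiv.Perm.apply_inv_self] at this
  exact (Fin.castSucc_lt_succ (i := i)).ne this

lemma mem_invL_sgen_mul (i : Fin n) (σ : Equiv.Perm (Fin (n+1))) (p : Fin (n+1) × Fin (n+1)) :
    p ∈ InvL (sgen i * σ) ↔
      ((p ∈ InvL σ ∧ p ≠ (σ⁻¹ i.succ, σ⁻¹ i.castSucc)) ∨
       (p = (σ⁻¹ i.castSucc, σ⁻¹ i.succ) ∧ σ⁻¹ i.castSucc < σ⁻¹ i.succ)) := by
  obtain ⟨k, l⟩ := p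
  have hd : ((i.succ : Fin (n+1)) : ℕ) = ((i.castSucc : Fin (n+1)) : ℕ) + 1 := by simp
  have hc : ∀ x : Fin (n+1), σ x = i.castSucc ↔ x = σ⁻¹ i.castSucc := fun x => by
    rw [Equiv.Perm.inv_def, Equiv.apply_eq_iff_eq_symm_apply]
  have hsu : ∀ x : Fin (n+1), σ x = i.succ ↔ x = σ⁻¹ i.succ := fun x => by
    rw [Equiv.Perm.inv_def, Equiv.apply_eq_iff_eq_symm_apply]
  have hmul : ∀ x, (sgen i * σ) x = Equiv.swap i.castSucc i.succ (σ x) := fun x => rfl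
  simp only [InvL, Set.mem_setOf_eq, hmul, swap_lt_swap hd, Prod.mk.injEq, ne_eq, not_and]
  simp only [hc, hsu]
  set a := σ⁻¹ i.castSucc with ha
  set b := σ⁻¹ i.succ with hb
  have hab : a ≠ b := apply_inv_ne
  have hsa : σ a = i.castSucc := by rw [ha]; exact σ.apply_inv_self _
  have hsb : σ b = i.succ := by rw [hb]; exact σ.apply_inv_self _
  have hcd : i.castSucc < i.succ := Fin.castSucc_lt_succ (i := i)
  by_cases hs : (l = a ∧ k = b) ∨ (l = b ∧ k = a)
  · rw [if_pos hs]
    rcases hs with ⟨rfl, rfl⟩ | ⟨rfl, rfl⟩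
    · constructor
      · rintro ⟨-, hlt⟩; rw [hsa, hsb] at hlt; exact absurd hlt (asymm hcd)
      · rintro (⟨⟨-, hlt⟩, hne⟩ | ⟨⟨h1, h2⟩, -⟩)
        · exact absurd rfl (hne rfl)
        · exact absurd h1 (Ne.symm hab)
    · rw [hsa, hsb]
      constructor
      · rintro ⟨hkl, -⟩; exact Or.inr ⟨⟨rfl, rfl⟩, hkl⟩
      · rintro (⟨⟨hkl, hlt⟩, -⟩ | ⟨-, hkl⟩)
        · exact absurd hlt (asymm hcd)
        · exact ⟨hkl, hcd⟩
  · rw [if_neg hs]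
    push_neg at hs
    constructor
    · rintro ⟨hkl, hlt⟩
      refine Or.inl ⟨⟨hkl, hlt⟩, fun hk hl => hs.1 hl hk⟩
    · rintro (⟨⟨hkl, hlt⟩, -⟩ | ⟨⟨rfl, rfl⟩, hlt⟩)
      · exact ⟨hkl, hlt⟩
      · exact absurd rfl (hs.2 rfl)

lemma invL_injective {x y : Equiv.Perm (Fin (n+1))} (h : InvL x = InvL y) : x = y := by
  have hs : StrictMono ⇑(y * x⁻¹) := by
    intro u v huv
    have hkl : x (x⁻¹ u) < x (x⁻¹ v) := by
      simpa [Equiv.Perm.apply_inv_self] using huv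
    have hne : x⁻¹ u ≠ x⁻¹ v := fun he => huv.ne (by rw [← x.apply_inv_self u, he,
      x.apply_inv_self])
    show y (x⁻¹ u) < y (x⁻¹ v)
    rcases lt_or_gt_of_ne hne with hlt | hgt
    · by_contra hcon
      push_neg at hcon
      have hyn : y (x⁻¹ v) < y (x⁻¹ u) :=
        lt_of_le_of_ne hcon (fun he => hne.symm (y.injective he))
      have : (x⁻¹ u, x⁻¹ v) ∈ InvL x := by
        rw [h]; exact ⟨hlt, hyn⟩
      exact absurd hkl (asymm this.2)
    · have : (x⁻¹ v, x⁻¹ u) ∈ InvL x := ⟨hgt, hkl⟩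
      rw [h] at this
      exact this.2
  have := perm_strictMono_eq_one hs
  have := congrArg (· * x) this
  simpa [mul_assoc] using this.symm

lemma desL_iff (i : Fin n) (σ : Equiv.Perm (Fin (n+1))) :
    i ∈ DesL σ ↔ σ⁻¹ i.succ < σ⁻¹ i.castSucc := by
  classical
  set a := σ⁻¹ i.castSucc with ha
  set b := σ⁻¹ i.succ with hb
  have hab : a ≠ b := apply_inv_ne
  have hsa : σ a = i.castSucc := σ.apply_inv_self _
  have hsb : σ b = i.succ := σ.apply_inv_self _
  have hcd : i.castSucc < i.succ := Fin.castSucc_lt_succ (i := i)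
  have key : ∀ p : Fin (n+1) × Fin (n+1),
      (p.1 < p.2 ∧ (sgen i * σ) p.2 < (sgen i * σ) p.1) ↔
      (((p.1 < p.2 ∧ σ p.2 < σ p.1) ∧ p ≠ (b, a)) ∨ (p = (a, b) ∧ a < b)) :=
    fun p => mem_invL_sgen_mul i σ p
  rcases lt_trichotomy a b with hlt | heq | hgt
  · -- not a descent : len increases
    have hfe : (Finset.univ.filter fun p : Fin (n+1) × Fin (n+1) =>
        p.1 < p.2 ∧ (sgen i * σ) p.2 < (sgen i * σ) p.1) =
        insert (a, b) (Finset.univ.filter fun p : Fin (n+1) × Fin (n+1) =>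
          p.1 < p.2 ∧ σ p.2 < σ p.1) := by
      ext p
      simp only [Finset.mem_filter, Finset.mem_univ, true_and, Finset.mem_insert, key p]
      constructor
      · rintro (⟨hp, -⟩ | ⟨rfl, -⟩)
        · exact Or.inr hp
        · exact Or.inl rfl
      · rintro (rfl | hp)
        · exact Or.inr ⟨rfl, hlt⟩
        · refine Or.inl ⟨hp, fun he => ?_⟩
          rw [he] at hp
          exact absurd hp.1 (asymm hlt)
    have hnot : (a, b) ∉ (Finset.univ.filter fun p : Fin (n+1) × Fin (n+1) =>
        p.1 < p.2 ∧ σ p.2 < σ p.1) := by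
      intro hmem'
      rw [Finset.mem_filter] at hmem'
      have h2 := hmem'.2.2
      rw [hsa, hsb] at h2
      exact absurd h2 (asymm hcd)
    constructor
    · intro hdes
      exfalso
      have : len (sgen i * σ) = len σ + 1 := by
        rw [len, len, hfe, Finset.card_insert_of_notMem hnot]
      rw [DesL, Set.mem_setOf_eq, this] at hdes
      omega
    · intro hcon; exact absurd hcon (asymm hlt)
  · exact absurd heq hab
  · -- descent : len decreases
    have hmem : (b, a) ∈ (Finset.univ.filter fun p : Fin (n+1) × Fin (n+1) =>
        p.1 < p.2 ∧ σ p.2 < σ p.1) := by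
      simp only [Finset.mem_filter, Finset.mem_univ, true_and]
      exact ⟨hgt, by rw [hsa, hsb]; exact hcd⟩
    have hfe : (Finset.univ.filter fun p : Fin (n+1) × Fin (n+1) =>
        p.1 < p.2 ∧ (sgen i * σ) p.2 < (sgen i * σ) p.1) =
        (Finset.univ.filter fun p : Fin (n+1) × Fin (n+1) =>
          p.1 < p.2 ∧ σ p.2 < σ p.1).erase (b, a) := by
      ext p
      simp only [Finset.mem_filter, Finset.mem_univ, true_and, Finset.mem_erase, key p]
      constructor
      · rintro (⟨hp, hne⟩ | ⟨rfl, hl⟩)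
        · exact ⟨hne, hp⟩
        · exact absurd hl (asymm hgt)
      · rintro ⟨hne, hp⟩
        exact Or.inl ⟨hp, hne⟩
    have hlen : len (sgen i * σ) < len σ := by
      rw [len, len, hfe]
      exact Finset.card_erase_lt_of_mem hmem
    exact ⟨fun _ => hgt, fun _ => hlen⟩

lemma invL_sgen_eq {i : Fin n} {σ : Equiv.Perm (Fin (n+1))}
    (hab : σ⁻¹ i.castSucc < σ⁻¹ i.succ) :
    InvL (sgen i * σ) = insert (σ⁻¹ i.castSucc, σ⁻¹ i.succ) (InvL σ) := by
  ext p
  rw [mem_invL_sgen_mul, Set.mem_insert_iff]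
  constructor
  · rintro (⟨hp, -⟩ | ⟨rfl, -⟩)
    · exact Or.inr hp
    · exact Or.inl rfl
  · rintro (rfl | hp)
    · exact Or.inr ⟨rfl, hab⟩
    · refine Or.inl ⟨hp, fun he => ?_⟩
      rw [he] at hp
      exact absurd hp.1 (asymm hab)

lemma not_mem_invL {i : Fin n} {σ : Equiv.Perm (Fin (n+1))}
    (hab : σ⁻¹ i.castSucc < σ⁻¹ i.succ) :
    (σ⁻¹ i.castSucc, σ⁻¹ i.succ) ∉ InvL σ := by
  rintro ⟨-, h2⟩
  rw [σ.apply_inv_self, σ.apply_inv_self] at h2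
  exact absurd h2 (asymm (Fin.castSucc_lt_succ (i := i)))

lemma sgen_inv_apply (i : Fin n) (σ : Equiv.Perm (Fin (n+1))) (v : Fin (n+1)) :
    (sgen i * σ)⁻¹ v = σ⁻¹ (Equiv.swap i.castSucc i.succ v) := by
  rfl

lemma desL_sgen_self {i : Fin n} {σ : Equiv.Perm (Fin (n+1))}
    (hab : σ⁻¹ i.castSucc < σ⁻¹ i.succ) : i ∈ DesL (sgen i * σ) := by
  rw [desL_iff, sgen_inv_apply, sgen_inv_apply, Equiv.swap_apply_right, Equiv.swap_apply_left]
  exact hab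

lemma lLE_sgen {i : Fin n} {σ : Equiv.Perm (Fin (n+1))}
    (hab : σ⁻¹ i.castSucc < σ⁻¹ i.succ) : lLE σ (sgen i * σ) := by
  rw [lLE, invL_sgen_eq hab]
  exact Set.subset_insert _ _

lemma sgen_mul_ne {i : Fin n} (σ : Equiv.Perm (Fin (n+1))) : sgen i * σ ≠ σ := by
  intro h
  have : sgen i = 1 := by
    have := congrArg (· * σ⁻¹) h
    simpa [mul_assoc] using this
  rw [show sgen i = Equiv.swap i.castSucc i.succ from rfl, Equiv.swap_eq_one_iff] at this
  exact (Fin.castSucc_lt_succ (i := i)).ne this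

/-- Chain lemma: a strict step exists between any two comparable distinct permutations. -/
lemma exists_step {x y : Equiv.Perm (Fin (n+1))} (hxy : lLE x y) (hne : x ≠ y) :
    ∃ j : Fin n, x⁻¹ j.castSucc < x⁻¹ j.succ ∧ lLE (sgen j * x) y := by
  set w := y * x⁻¹ with hw
  have hwne : w ≠ 1 := by
    intro h
    rw [hw, mul_inv_eq_one] at h
    exact hne h.symm
  obtain ⟨j, hj⟩ : ∃ j : Fin n, w j.succ < w j.castSucc := by
    by_contra hcon
    push_neg at hcon
    apply hwne
    apply perm_strictMono_eq_one
    rw [Fin.strictMono_iff_lt_succ]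
    intro j
    refine lt_of_le_of_ne (hcon j) fun he => ?_
    exact (Fin.castSucc_lt_succ (i := j)).ne (w.injective he)
  have hwc : ∀ v, w v = y (x⁻¹ v) := fun v => rfl
  have hab : x⁻¹ j.castSucc < x⁻¹ j.succ := by
    rcases lt_trichotomy (x⁻¹ j.castSucc) (x⁻¹ j.succ) with h | h | h
    · exact h
    · exact absurd h apply_inv_ne
    · exfalso
      have hmem : (x⁻¹ j.succ, x⁻¹ j.castSucc) ∈ InvL x := by
        refine ⟨h, ?_⟩
        rw [x.apply_inv_self, x.apply_inv_self]
        exact Fin.castSucc_lt_succ (i := j)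
      have := (hxy hmem).2
      rw [← hwc, ← hwc] at this
      exact absurd this (asymm hj)
  refine ⟨j, hab, ?_⟩
  rw [lLE, invL_sgen_eq hab]
  rintro p (rfl | hp)
  · refine ⟨hab, ?_⟩
    show y (x⁻¹ j.succ) < y (x⁻¹ j.castSucc)
    rw [← hwc, ← hwc]
    exact hj
  · exact hxy hp

lemma descent_step_unique {γ : Equiv.Perm (Fin (n+1))} {i j : Fin n}
    (hab : γ⁻¹ i.castSucc < γ⁻¹ i.succ)
    (hj' : j ∈ DesL (sgen i * γ)) (hj : j ∉ DesL γ) : j = i := by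
  rw [desL_iff, sgen_inv_apply, sgen_inv_apply] at hj'
  rw [desL_iff] at hj
  push_neg at hj
  by_contra hne
  have hvi : (j : ℕ) ≠ (i : ℕ) := fun h => hne (Fin.ext h)
  rcases Nat.lt_trichotomy ((j : ℕ) + 1) (i : ℕ) with h1 | h1 | h1
  · -- j + 1 < i : both swaps act as identity
    have e1 : Equiv.swap i.castSucc i.succ j.castSucc = j.castSucc :=
      Equiv.swap_apply_of_ne_of_ne (by simp [Fin.ext_iff]; omega) (by simp [Fin.ext_iff]; omega)
    have e2 : Equiv.swap i.castSucc i.succ j.succ = j.succ :=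
      Equiv.swap_apply_of_ne_of_ne (by simp [Fin.ext_iff]; omega) (by simp [Fin.ext_iff]; omega)
    rw [e1, e2] at hj'
    exact absurd hj (not_le_of_gt hj')
  · -- j + 1 = i : j.succ = i.castSucc
    have e0 : (j.succ : Fin (n+1)) = i.castSucc := by simp [Fin.ext_iff]; omega
    have e1 : Equiv.swap i.castSucc i.succ j.castSucc = j.castSucc :=
      Equiv.swap_apply_of_ne_of_ne (by simp [Fin.ext_iff]; omega) (by simp [Fin.ext_iff]; omega)
    have e2 : Equiv.swap i.castSucc i.succ j.succ = i.succ := by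
      rw [e0, Equiv.swap_apply_left]
    rw [e1, e2] at hj'
    rw [e0] at hj
    -- hj' : γ⁻¹ i.succ < γ⁻¹ j.castSucc ; hj : γ⁻¹ j.castSucc ≤ γ⁻¹ i.castSucc
    exact absurd (hj'.trans_le hj) (asymm hab)
  · rcases Nat.lt_trichotomy (j : ℕ) ((i : ℕ) + 1) with h2 | h2 | h2
    · omega
    · -- j = i + 1 : j.castSucc = i.succ
      have e0 : (j.castSucc : Fin (n+1)) = i.succ := by simp [Fin.ext_iff]; omega
      have e1 : Equiv.swap i.castSucc i.succ j.castSucc = i.castSucc := by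
        rw [e0, Equiv.swap_apply_right]
      have e2 : Equiv.swap i.castSucc i.succ j.succ = j.succ :=
        Equiv.swap_apply_of_ne_of_ne (by simp [Fin.ext_iff]; omega) (by simp [Fin.ext_iff]; omega)
      rw [e1, e2] at hj'
      rw [e0] at hj
      -- hj' : γ⁻¹ j.succ < γ⁻¹ i.castSucc ; hj : γ⁻¹ i.succ ≤ γ⁻¹ j.succ
      exact absurd ((hj.trans_lt hj').trans hab) (lt_irrefl _)
    · -- i + 1 < j : identity on both
      have e1 : Equiv.swap i.castSucc i.succ j.castSucc = j.castSucc :=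
        Equiv.swap_apply_of_ne_of_ne (by simp [Fin.ext_iff]; omega) (by simp [Fin.ext_iff]; omega)
      have e2 : Equiv.swap i.castSucc i.succ j.succ = j.succ :=
        Equiv.swap_apply_of_ne_of_ne (by simp [Fin.ext_iff]; omega) (by simp [Fin.ext_iff]; omega)
      rw [e1, e2] at hj'
      exact absurd hj (not_le_of_gt hj')

lemma forward (σ₁ ρ₁ σ₂ ρ₂ : Equiv.Perm (Fin (n + 1)))
    (f : Equiv.Perm (Fin (n + 1)) → Equiv.Perm (Fin (n + 1)))
    (hbij : Set.BijOn f (lInterval σ₁ ρ₁) (lInterval σ₂ ρ₂))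
    (hord : ∀ x ∈ lInterval σ₁ ρ₁, ∀ y ∈ lInterval σ₁ ρ₁, (lLE x y ↔ lLE (f x) (f y)))
    (hdes : ∀ x ∈ lInterval σ₁ ρ₁, DesL (f x) = DesL x)
    {γ γ' : Equiv.Perm (Fin (n + 1))} (hγ : γ ∈ lInterval σ₁ ρ₁) (hγ' : γ' ∈ lInterval σ₁ ρ₁)
    {i : Fin n} (hle : lLE γ γ') (heq : γ' = sgen i * γ) :
    lLE (f γ) (f γ') ∧ f γ' = sgen i * f γ := by
  subst heq
  set a := γ⁻¹ i.castSucc with ha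
  set b := γ⁻¹ i.succ with hb
  have hab : a < b := by
    rcases lt_trichotomy a b with h | h | h
    · exact h
    · exact absurd h apply_inv_ne
    · exfalso
      have hmem : (b, a) ∈ InvL γ := by
        refine ⟨h, ?_⟩
        rw [ha, hb, γ.apply_inv_self, γ.apply_inv_self]
        exact Fin.castSucc_lt_succ (i := i)
      have := hle hmem
      rw [mem_invL_sgen_mul] at this
      rcases this with ⟨-, hne⟩ | ⟨heqp, -⟩
      · exact hne rfl
      · have : b = a := congrArg Prod.fst heqp
        exact apply_inv_ne this.symm
  have hfle : lLE (f γ) (f (sgen i * γ)) := (hord γ hγ _ hγ').mp hle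
  have hfne : f γ ≠ f (sgen i * γ) := fun h =>
    (sgen_mul_ne γ) (hbij.injOn hγ hγ' h).symm
  obtain ⟨j, hab₂, hstep₂⟩ := exists_step hfle hfne
  have hstep₁ : lLE (f γ) (sgen j * f γ) := lLE_sgen hab₂
  have hz : sgen j * f γ ∈ lInterval σ₂ ρ₂ :=
    ⟨Set.Subset.trans (hbij.mapsTo hγ).1 hstep₁,
     Set.Subset.trans hstep₂ (hbij.mapsTo hγ').2⟩
  obtain ⟨w, hw, hfw⟩ := hbij.surjOn hz
  have hw₁ : lLE γ w := (hord γ hγ w hw).mpr (by rw [hfw]; exact hstep₁)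
  have hw₂ : lLE w (sgen i * γ) := (hord w hw _ hγ').mpr (by rw [hfw]; exact hstep₂)
  have hwne : w ≠ γ := by
    intro h
    rw [h] at hfw
    exact (sgen_mul_ne (f γ)) hfw.symm
  have hssub : InvL γ ⊂ InvL w :=
    hw₁.ssubset_of_ne fun h => hwne (invL_injective h.symm)
  obtain ⟨p, hpw, hpγ⟩ := Set.exists_of_ssubset hssub
  have hpins := hw₂ hpw
  rw [lLE, invL_sgen_eq hab] at hw₂
  rw [invL_sgen_eq hab] at hpins
  have hpab : p = (a, b) := by
    rcases hpins with h | h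
    · exact h
    · exact absurd h hpγ
  have hweq : w = sgen i * γ := by
    apply invL_injective
    rw [invL_sgen_eq hab]
    apply Set.Subset.antisymm hw₂
    rintro q (rfl | hq)
    · rw [← hpab]; exact hpw
    · exact hw₁ hq
  rw [hweq] at hfw
  -- hfw : f (sgen i * γ) = sgen j * f γ
  have hji : j = i := by
    have hjdes : j ∈ DesL (sgen j * f γ) := desL_sgen_self hab₂
    rw [← hfw, hdes _ hγ'] at hjdes
    have hjnot : j ∉ DesL γ := by
      rw [← hdes γ hγ, desL_iff]
      exact asymm hab₂
    exact descent_step_unique hab hjdes hjnot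
  rw [hji] at hfw
  exact ⟨hfle, hfw⟩

theorem descent_preserving_is_colored_digraph_iso' {n : ℕ}
    (σ₁ ρ₁ σ₂ ρ₂ : Equiv.Perm (Fin (n + 1))) (h₁ : lLE σ₁ ρ₁) (h₂ : lLE σ₂ ρ₂)
    (f : Equiv.Perm (Fin (n + 1)) → Equiv.Perm (Fin (n + 1)))
    (hbij : Set.BijOn f (lInterval σ₁ ρ₁) (lInterval σ₂ ρ₂))
    (hord : ∀ x ∈ lInterval σ₁ ρ₁, ∀ y ∈ lInterval σ₁ ρ₁, (lLE x y ↔ lLE (f x) (f y)))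
    (hdes : ∀ x ∈ lInterval σ₁ ρ₁, DesL (f x) = DesL x) :
    ∀ γ ∈ lInterval σ₁ ρ₁, ∀ γ' ∈ lInterval σ₁ ρ₁, ∀ i : Fin n,
      (lLE γ γ' ∧ γ' = sgen i * γ) ↔ (lLE (f γ) (f γ') ∧ f γ' = sgen i * f γ) := by
  intro γ hγ γ' hγ' i
  constructor
  · rintro ⟨hle, heq⟩
    exact forward σ₁ ρ₁ σ₂ ρ₂ f hbij hord hdes hγ hγ' hle heq
  · rintro ⟨hle, heq⟩
    classical
    set g := Function.invFunOn f (lInterval σ₁ ρ₁) with hg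
    have hinv : Set.InvOn g f (lInterval σ₁ ρ₁) (lInterval σ₂ ρ₂) := hbij.invOn_invFunOn
    have gbij : Set.BijOn g (lInterval σ₂ ρ₂) (lInterval σ₁ ρ₁) := Set.BijOn.symm hinv.symm hbij
    have hgf : ∀ x ∈ lInterval σ₁ ρ₁, g (f x) = x := fun x hx => hinv.1 hx
    have gord : ∀ x ∈ lInterval σ₂ ρ₂, ∀ y ∈ lInterval σ₂ ρ₂,
        (lLE x y ↔ lLE (g x) (g y)) := by
      intro x hx y hy
      obtain ⟨x', hx', rfl⟩ := hbij.surjOn hx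
      obtain ⟨y', hy', rfl⟩ := hbij.surjOn hy
      rw [hgf x' hx', hgf y' hy']
      exact (hord x' hx' y' hy').symm
    have gdes : ∀ x ∈ lInterval σ₂ ρ₂, DesL (g x) = DesL x := by
      intro x hx
      obtain ⟨x', hx', rfl⟩ := hbij.surjOn hx
      rw [hgf x' hx']
      exact (hdes x' hx').symm
    have h1 := forward σ₂ ρ₂ σ₁ ρ₁ g gbij gord gdes
      (hbij.mapsTo hγ) (hbij.mapsTo hγ') hle heq
    rw [hgf γ hγ, hgf γ' hγ'] at h1
    exact h1

end DPaux

/-- Every descent-preserving poset isomorphism between two left weak Bruhat intervals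
is a colored digraph isomorphism. -/
theorem descent_preserving_is_colored_digraph_iso {n : ℕ}
    (σ₁ ρ₁ σ₂ ρ₂ : Equiv.Perm (Fin (n + 1))) (h₁ : lLE σ₁ ρ₁) (h₂ : lLE σ₂ ρ₂)
    (f : Equiv.Perm (Fin (n + 1)) → Equiv.Perm (Fin (n + 1)))
    (hbij : Set.BijOn f (lInterval σ₁ ρ₁) (lInterval σ₂ ρ₂))
    (hord : ∀ x ∈ lInterval σ₁ ρ₁, ∀ y ∈ lInterval σ₁ ρ₁, (lLE x y ↔ lLE (f x) (f y)))
    (hdes : ∀ x ∈ lInterval σ₁ ρ₁, DesL (f x) = DesL x) :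
    ∀ γ ∈ lInterval σ₁ ρ₁, ∀ γ' ∈ lInterval σ₁ ρ₁, ∀ i : Fin n,
      (lLE γ γ' ∧ γ' = sgen i * γ) ↔ (lLE (f γ) (f γ') ∧ f γ' = sgen i * f γ) := by
  intro γ hγ γ' hγ' i
  exact DPaux.descent_preserving_is_colored_digraph_iso' σ₁ ρ₁ σ₂ ρ₂ h₁ h₂ f hbij hord hdes
    γ hγ γ' hγ' i
end

section
/- Let f : I₁ → I₂ be a descent-preserving poset isomorphism between left weak Bruhat intervals in S_n, and suppose γ ⋖ γ' is a cover in I₁ with γ' = s_iγ and f(γ') = s_j f(γ). Then j ≠ i - 1. -/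
lemma sgen_val {n : ℕ} (i : Fin n) (x : Fin (n+1)) :
    ((sgen i x : Fin (n+1)) : ℕ)
      = if (x:ℕ) = i then (i:ℕ)+1 else if (x:ℕ) = (i:ℕ)+1 then i else x := by
  unfold sgen
  rcases eq_or_ne x i.castSucc with h|h
  · subst h; simp
  · rcases eq_or_ne x i.succ with h2|h2
    · subst h2
      have : ((i.succ : Fin (n+1)) : ℕ) ≠ (i:ℕ) := by simp
      simp [this]
    · rw [Equiv.swap_apply_of_ne_of_ne h h2]
      have e1 : (x:ℕ) ≠ (i:ℕ) := fun hh => h (Fin.ext (by simpa using hh))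
      have e2 : (x:ℕ) ≠ (i:ℕ)+1 := fun hh => h2 (Fin.ext (by simpa using hh))
      simp [e1, e2]

lemma sgen_lt_iff {n : ℕ} (i : Fin n) {x y : Fin (n+1)}
    (h1 : ¬(x = i.castSucc ∧ y = i.succ)) (h2 : ¬(x = i.succ ∧ y = i.castSucc)) :
    sgen i x < sgen i y ↔ x < y := by
  have e1 : ∀ z : Fin (n+1), z = i.castSucc ↔ (z:ℕ) = (i:ℕ) := by
    intro z; rw [Fin.ext_iff]; simp
  have e2 : ∀ z : Fin (n+1), z = i.succ ↔ (z:ℕ) = (i:ℕ)+1 := by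
    intro z; rw [Fin.ext_iff]; simp
  rw [e1, e2] at h1 h2
  rw [Fin.lt_def, Fin.lt_def, sgen_val, sgen_val]
  split_ifs <;> omega

lemma mem_desL_iff {n : ℕ} (σ : Equiv.Perm (Fin (n+1))) (i : Fin n) :
    i ∈ DesL σ ↔ σ⁻¹ i.succ < σ⁻¹ i.castSucc := by
  classical
  set a := σ⁻¹ i.castSucc with ha
  set b := σ⁻¹ i.succ with hb
  have hσa : σ a = i.castSucc := σ.apply_symm_apply _
  have hσb : σ b = i.succ := σ.apply_symm_apply _
  have hcs : i.castSucc < i.succ := Fin.castSucc_lt_succ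
  have hab : a ≠ b := by
    intro h; rw [h, hσb] at hσa; exact absurd hσa hcs.ne'
  set A := (Finset.univ.filter fun p : Fin (n+1) × Fin (n+1) => p.1 < p.2 ∧ σ p.2 < σ p.1)
    with hA
  set B := (Finset.univ.filter fun p : Fin (n+1) × Fin (n+1) =>
      p.1 < p.2 ∧ (sgen i * σ) p.2 < (sgen i * σ) p.1) with hB
  have hlenA : len σ = A.card := rfl
  have hlenB : len (sgen i * σ) = B.card := rfl
  have key : ∀ p : Fin (n+1) × Fin (n+1), p ≠ (a,b) → p ≠ (b,a) →
      ((sgen i * σ) p.2 < (sgen i * σ) p.1 ↔ σ p.2 < σ p.1) := by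
    intro p h1 h2
    apply sgen_lt_iff
    · rintro ⟨e1, e2⟩
      apply h2
      rw [← hσa] at e1; rw [← hσb] at e2
      exact Prod.ext (σ.injective e2) (σ.injective e1)
    · rintro ⟨e1, e2⟩
      apply h1
      rw [← hσb] at e1; rw [← hσa] at e2
      exact Prod.ext (σ.injective e2) (σ.injective e1)
  have hsa : (sgen i * σ) a = i.succ := by
    simp [Equiv.Perm.mul_apply, hσa, sgen, Equiv.swap_apply_left]
  have hsb : (sgen i * σ) b = i.castSucc := by
    simp [Equiv.Perm.mul_apply, hσb, sgen, Equiv.swap_apply_right]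
  rcases lt_or_gt_of_ne hab with hlt | hgt
  · -- a < b : length increases, both sides false
    have hAB : A = B.erase (a, b) := by
      ext p
      simp only [hA, hB, Finset.mem_erase, Finset.mem_filter, Finset.mem_univ, true_and]
      by_cases hp : p = (a, b)
      · subst hp
        simp only [ne_eq, not_true_eq_false, false_and, iff_false]
        rintro ⟨-, hh⟩
        rw [hσa, hσb] at hh
        exact absurd hh hcs.asymm
      · by_cases hp2 : p = (b, a)
        · subst hp2
          simp only [ne_eq, hp, not_false_eq_true, true_and]
          constructor
          · rintro ⟨hh, -⟩; exact absurd hh hlt.asymm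
          · rintro ⟨hh, -⟩; exact absurd hh hlt.asymm
        · rw [key p hp hp2]
          simp [hp]
    have hmem : (a, b) ∈ B := by
      simp only [hB, Finset.mem_filter, Finset.mem_univ, true_and]
      exact ⟨hlt, by rw [hsa, hsb]; exact hcs⟩
    have hcard : A.card < B.card := by
      rw [hAB, Finset.card_erase_of_mem hmem]
      exact Nat.sub_lt (Finset.card_pos.mpr ⟨_, hmem⟩) one_pos
    constructor
    · intro h
      have h' : len (sgen i * σ) < len σ := h
      rw [hlenA, hlenB] at h'
      omega
    · intro h; exact absurd h hlt.asymm
  · -- b < a : length decreases, both sides true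
    have hBA : B = A.erase (b, a) := by
      ext p
      simp only [hA, hB, Finset.mem_erase, Finset.mem_filter, Finset.mem_univ, true_and]
      by_cases hp : p = (b, a)
      · subst hp
        simp only [ne_eq, not_true_eq_false, false_and, iff_false]
        rintro ⟨-, hh⟩
        rw [hsa, hsb] at hh
        exact absurd hh hcs.asymm
      · by_cases hp2 : p = (a, b)
        · subst hp2
          simp only [ne_eq, hp, not_false_eq_true, true_and]
          constructor
          · rintro ⟨hh, -⟩; exact absurd hh hgt.asymm
          · rintro ⟨hh, -⟩; exact absurd hh hgt.asymm
        · rw [key p hp2 hp]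
          simp [hp]
    have hmem : (b, a) ∈ A := by
      simp only [hA, Finset.mem_filter, Finset.mem_univ, true_and]
      exact ⟨hgt, by rw [hσa, hσb]; exact hcs⟩
    have hcard : B.card < A.card := by
      rw [hBA, Finset.card_erase_of_mem hmem]
      exact Nat.sub_lt (Finset.card_pos.mpr ⟨_, hmem⟩) one_pos
    constructor
    · intro _; exact hgt
    · intro _
      show len (sgen i * σ) < len σ
      rw [hlenA, hlenB]; exact hcard

lemma sgen_inv {n : ℕ} (i : Fin n) : (sgen i)⁻¹ = sgen i := by
  unfold sgen; exact Equiv.swap_inv _ _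

lemma mul_sgen_inv_apply {n : ℕ} (i : Fin n) (γ : Equiv.Perm (Fin (n+1))) (x : Fin (n+1)) :
    (sgen i * γ)⁻¹ x = γ⁻¹ (sgen i x) := by
  rw [mul_inv_rev, sgen_inv, Equiv.Perm.mul_apply]

lemma lLE_sgen_lt {n : ℕ} (i : Fin n) (γ : Equiv.Perm (Fin (n+1)))
    (h : lLE γ (sgen i * γ)) : γ⁻¹ i.castSucc < γ⁻¹ i.succ := by
  set a := γ⁻¹ i.castSucc with ha
  set b := γ⁻¹ i.succ with hb
  have hγa : γ a = i.castSucc := γ.apply_symm_apply _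
  have hγb : γ b = i.succ := γ.apply_symm_apply _
  have hcs : i.castSucc < i.succ := Fin.castSucc_lt_succ
  have hab : a ≠ b := by intro hh; rw [hh, hγb] at hγa; exact absurd hγa hcs.ne'
  rcases lt_or_gt_of_ne hab with h'|h'
  · exact h'
  · exfalso
    have hm : (b, a) ∈ InvL γ := ⟨h', by rw [hγa, hγb]; exact hcs⟩
    obtain ⟨-, hlt⟩ := h hm
    have e1 : (sgen i * γ) a = i.succ := by
      simp [Equiv.Perm.mul_apply, hγa, sgen]
    have e2 : (sgen i * γ) b = i.castSucc := by
      simp [Equiv.Perm.mul_apply, hγb, sgen]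
    rw [e1, e2] at hlt
    exact absurd hlt hcs.asymm

/-- If `f` is a descent-preserving poset isomorphism between left weak Bruhat intervals,
`γ ⋖ γ'` is a cover in `I₁` with `γ' = s_i γ`, and `f(γ') = s_j f(γ)`, then `j ≠ i - 1`. -/
theorem cover_label_ne_pred {n : ℕ}
    (σ₁ ρ₁ σ₂ ρ₂ : Equiv.Perm (Fin (n + 1))) (h₁ : lLE σ₁ ρ₁) (h₂ : lLE σ₂ ρ₂)
    (f : Equiv.Perm (Fin (n + 1)) → Equiv.Perm (Fin (n + 1)))
    (hbij : Set.BijOn f (lInterval σ₁ ρ₁) (lInterval σ₂ ρ₂))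
    (hord : ∀ x ∈ lInterval σ₁ ρ₁, ∀ y ∈ lInterval σ₁ ρ₁, (lLE x y ↔ lLE (f x) (f y)))
    (hdes : ∀ x ∈ lInterval σ₁ ρ₁, DesL (f x) = DesL x)
    (γ γ' : Equiv.Perm (Fin (n + 1))) (hγ : γ ∈ lInterval σ₁ ρ₁) (hγ' : γ' ∈ lInterval σ₁ ρ₁)
    (i j : Fin n) (hcov : γ' = sgen i * γ) (hle : lLE γ γ')
    (hj : f γ' = sgen j * f γ) :
    (j : ℕ) + 1 ≠ (i : ℕ) := by
  intro hc
  -- basic Fin facts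
  have hjs : (j.succ : Fin (n+1)) = i.castSucc := Fin.ext (by simp [hc])
  have hjc1 : (j.castSucc : Fin (n+1)) ≠ i.castSucc := by
    intro hh; have := congrArg Fin.val hh; simp at this; omega
  have hjc2 : (j.castSucc : Fin (n+1)) ≠ i.succ := by
    intro hh; have := congrArg Fin.val hh; simp at this; omega
  -- a < b for γ
  have hab : γ⁻¹ i.castSucc < γ⁻¹ i.succ := lLE_sgen_lt i γ (hcov ▸ hle)
  -- a < b for f γ
  have hle2 : lLE (f γ) (f γ') := (hord γ hγ γ' hγ').mp hle
  have hab2 : (f γ)⁻¹ j.castSucc < (f γ)⁻¹ j.succ := lLE_sgen_lt j (f γ) (hj ▸ hle2)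
  -- j ∈ DesL (f γ')
  have hjfγ' : j ∈ DesL (f γ') := by
    rw [mem_desL_iff, hj, mul_sgen_inv_apply, mul_sgen_inv_apply]
    have e1 : sgen j j.succ = j.castSucc := Equiv.swap_apply_right _ _
    have e2 : sgen j j.castSucc = j.succ := Equiv.swap_apply_left _ _
    rw [e1, e2]
    exact hab2
  -- j ∉ DesL (f γ)
  have hjfγ : j ∉ DesL (f γ) := by
    rw [mem_desL_iff]
    exact hab2.asymm
  -- transfer via hdes
  have hjγ' : j ∈ DesL γ' := (hdes γ' hγ') ▸ hjfγ'
  have hjγ : j ∉ DesL γ := fun hh => hjfγ ((hdes γ hγ) ▸ hh)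
  -- unpack j ∈ DesL γ'
  rw [mem_desL_iff, hcov, mul_sgen_inv_apply, mul_sgen_inv_apply] at hjγ'
  have e1 : sgen i j.succ = i.succ := by rw [hjs]; exact Equiv.swap_apply_left _ _
  have e2 : sgen i j.castSucc = j.castSucc := Equiv.swap_apply_of_ne_of_ne hjc1 hjc2
  rw [e1, e2] at hjγ'
  -- hjγ' : γ⁻¹ i.succ < γ⁻¹ j.castSucc
  apply hjγ
  rw [mem_desL_iff, hjs]
  exact hab.trans hjγ'
end

section
/- Let λ/μ be a skew partition of size n and let τ be a distinguished Schur labeling of shape λ/μ. For every standard Young tableau T of shape λ/μ, read_{τ₀}(T) ≤_R read_τ(T) ≤_R read_{τ₁}(T) in the right weak Bruhat order, where τ₀ is the Schur labeling filling 1,…,n right-to-left along rows starting from the top row, and τ₁ is the Schur labeling filling 1,…,n top-to-bottom along columns starting from the rightmost column. Moreover {read_τ(T) : τ distinguished Schur labeling of shape λ/μ} = [read_{τ₀}(T), read_{τ₁}(T)]_R. -/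
/-- A skew partition `λ/μ`: a pair of Young diagrams with `μ ⊆ λ`. -/
structure SkewShape where
  outer : YoungDiagram
  inner : YoungDiagram
  le : inner ≤ outer

/-- The cells of the skew diagram `λ/μ` (pairs `(row, column)`). -/
def SkewShape.cells (s : SkewShape) : Finset (ℕ × ℕ) := s.outer.cells \ s.inner.cells

/-- A bijective tableau of shape `λ/μ` of size `n`: a filling of the cells with the
`n` distinct entries of `Fin n`. -/
def IsBijFilling (s : SkewShape) (n : ℕ) (τ : ℕ × ℕ → Fin n) : Prop :=
  Set.BijOn τ ↑s.cells Set.univ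

/-- A standard Young tableau of shape `λ/μ`: a bijective filling whose rows increase
left to right and whose columns increase top to bottom. -/
def IsSYT (s : SkewShape) (n : ℕ) (T : ℕ × ℕ → Fin n) : Prop :=
  IsBijFilling s n T ∧
  (∀ i j, (i, j) ∈ s.cells → (i, j + 1) ∈ s.cells → T (i, j) < T (i, j + 1)) ∧
  (∀ i j, (i, j) ∈ s.cells → (i + 1, j) ∈ s.cells → T (i, j) < T (i + 1, j))

/-- A Schur labeling: a bijective filling whose rows strictly decrease left to right
and whose columns strictly increase top to bottom. -/
def IsSchurLabeling (s : SkewShape) (n : ℕ) (τ : ℕ × ℕ → Fin n) : Prop :=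
  IsBijFilling s n τ ∧
  (∀ i j, (i, j) ∈ s.cells → (i, j + 1) ∈ s.cells → τ (i, j + 1) < τ (i, j)) ∧
  (∀ i j, (i, j) ∈ s.cells → (i + 1, j) ∈ s.cells → τ (i, j) < τ (i + 1, j))

/-- A distinguished Schur labeling: `τ_B ≥ τ_{B'}` whenever `B` is weakly below and
weakly left of `B'`. -/
def IsDistinguished (s : SkewShape) (n : ℕ) (τ : ℕ × ℕ → Fin n) : Prop :=
  IsSchurLabeling s n τ ∧
  ∀ B ∈ s.cells, ∀ B' ∈ s.cells, B'.1 ≤ B.1 → B.2 ≤ B'.2 → τ B' ≤ τ B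

/-- `π = read_τ(T)`, i.e. `π(τ(B)) = T(B)` for every box `B`; since `τ` is a bijective
filling this determines `π` completely. -/
def IsReading (s : SkewShape) {n : ℕ} (τ T : ℕ × ℕ → Fin n) (π : Equiv.Perm (Fin n)) : Prop :=
  ∀ B ∈ s.cells, π (τ B) = T B

/-- The poset `poset(τ)` on labels: `x ≤ y` iff the box of `x` is weakly upper-left of
the box of `y`. -/
def posetRel (s : SkewShape) {n : ℕ} (τ : ℕ × ℕ → Fin n) (x y : Fin n) : Prop :=
  ∃ B ∈ s.cells, ∃ B' ∈ s.cells, τ B = x ∧ τ B' = y ∧ B.1 ≤ B'.1 ∧ B.2 ≤ B'.2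

/-- `τ` is the Schur labeling `τ₀`, filling `1,…,n` right-to-left along rows starting
with the top row: characterized by its bijectivity together with the induced order of
the boxes. -/
def IsTau0 (s : SkewShape) (n : ℕ) (τ : ℕ × ℕ → Fin n) : Prop :=
  IsBijFilling s n τ ∧
  ∀ B ∈ s.cells, ∀ B' ∈ s.cells, B ≠ B' →
    (τ B < τ B' ↔ (B.1 < B'.1 ∨ (B.1 = B'.1 ∧ B'.2 < B.2)))

/-- `τ` is the Schur labeling `τ₁`, filling `1,…,n` top-to-bottom along columns starting
with the rightmost column. -/
def IsTau1 (s : SkewShape) (n : ℕ) (τ : ℕ × ℕ → Fin n) : Prop :=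
  IsBijFilling s n τ ∧
  ∀ B ∈ s.cells, ∀ B' ∈ s.cells, B ≠ B' →
    (τ B < τ B' ↔ (B'.2 < B.2 ∨ (B.2 = B'.2 ∧ B.1 < B'.1)))

/-- `T` is the standard Young tableau `T_{λ/μ}`, filling `1,…,n` row by row from the
top, left to right in each row. -/
def IsRowTab (s : SkewShape) (n : ℕ) (T : ℕ × ℕ → Fin n) : Prop :=
  IsBijFilling s n T ∧
  ∀ B ∈ s.cells, ∀ B' ∈ s.cells, B ≠ B' →
    (T B < T B' ↔ (B.1 < B'.1 ∨ (B.1 = B'.1 ∧ B.2 < B'.2)))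

/-- `T` is the standard Young tableau `T'_{λ/μ}`, filling `1,…,n` column by column from
the leftmost column, top to bottom in each column. -/
def IsColTab (s : SkewShape) (n : ℕ) (T : ℕ × ℕ → Fin n) : Prop :=
  IsBijFilling s n T ∧
  ∀ B ∈ s.cells, ∀ B' ∈ s.cells, B ≠ B' →
    (T B < T B' ↔ (B.2 < B'.2 ∨ (B.2 = B'.2 ∧ B.1 < B'.1)))

section ReadAux

lemma SkewShape.mem_cells_iff (s : SkewShape) (B : ℕ × ℕ) :
    B ∈ s.cells ↔ B ∈ s.outer ∧ B ∉ s.inner := by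
  simp [SkewShape.cells, YoungDiagram.mem_cells]

lemma skew_between_row (s : SkewShape) {i j k j' : ℕ} (hjk : j ≤ k) (hkj : k ≤ j')
    (h1 : (i, j) ∈ s.cells) (h2 : (i, j') ∈ s.cells) : (i, k) ∈ s.cells := by
  rw [s.mem_cells_iff] at *
  exact ⟨s.outer.up_left_mem le_rfl hkj h2.1,
    fun hm => h1.2 (s.inner.up_left_mem le_rfl hjk hm)⟩

lemma skew_between_col (s : SkewShape) {i k i' j : ℕ} (hik : i ≤ k) (hki : k ≤ i')
    (h1 : (i, j) ∈ s.cells) (h2 : (i', j) ∈ s.cells) : (k, j) ∈ s.cells := by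
  rw [s.mem_cells_iff] at *
  exact ⟨s.outer.up_left_mem hki le_rfl h2.1,
    fun hm => h1.2 (s.inner.up_left_mem hik le_rfl hm)⟩

lemma skew_row_le {s : SkewShape} {n : ℕ} {T : ℕ × ℕ → Fin n} (hT : IsSYT s n T)
    {i j j' : ℕ} (h : j ≤ j') (h1 : (i, j) ∈ s.cells) (h2 : (i, j') ∈ s.cells) :
    T (i, j) ≤ T (i, j') := by
  induction j' with
  | zero => obtain rfl : j = 0 := Nat.le_zero.mp h; exact le_rfl
  | succ j' ih =>
    rcases eq_or_lt_of_le h with rfl | hlt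
    · exact le_rfl
    · have hj : j ≤ j' := Nat.lt_succ_iff.mp hlt
      have hmid : (i, j') ∈ s.cells := skew_between_row s hj (Nat.le_succ j') h1 h2
      exact le_trans (ih hj hmid) (le_of_lt (hT.2.1 i j' hmid h2))

lemma skew_col_le {s : SkewShape} {n : ℕ} {T : ℕ × ℕ → Fin n} (hT : IsSYT s n T)
    {i i' j : ℕ} (h : i ≤ i') (h1 : (i, j) ∈ s.cells) (h2 : (i', j) ∈ s.cells) :
    T (i, j) ≤ T (i', j) := by
  induction i' with
  | zero => obtain rfl : i = 0 := Nat.le_zero.mp h; exact le_rfl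
  | succ i' ih =>
    rcases eq_or_lt_of_le h with rfl | hlt
    · exact le_rfl
    · have hi : i ≤ i' := Nat.lt_succ_iff.mp hlt
      have hmid : (i', j) ∈ s.cells := skew_between_col s hi (Nat.le_succ i') h1 h2
      exact le_trans (ih hi hmid) (le_of_lt (hT.2.2 i' j hmid h2))

/-- If `B` is weakly northwest of `B'` and they are distinct cells, `T B < T B'`. -/
lemma skew_nw_lt {s : SkewShape} {n : ℕ} {T : ℕ × ℕ → Fin n} (hT : IsSYT s n T)
    {B B' : ℕ × ℕ} (hB : B ∈ s.cells) (hB' : B' ∈ s.cells)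
    (h1 : B.1 ≤ B'.1) (h2 : B.2 ≤ B'.2) (hne : B ≠ B') : T B < T B' := by
  obtain ⟨a, b⟩ := B
  obtain ⟨c, d⟩ := B'
  simp only at h1 h2
  have hC : (a, d) ∈ s.cells := by
    rw [s.mem_cells_iff] at hB hB' ⊢
    exact ⟨s.outer.up_left_mem h1 le_rfl hB'.1,
      fun hm => hB.2 (s.inner.up_left_mem le_rfl h2 hm)⟩
  have hle : T (a, b) ≤ T (c, d) :=
    le_trans (skew_row_le hT h2 hB hC) (skew_col_le hT h1 hC hB')
  exact lt_of_le_of_ne hle fun heq =>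
    hne (hT.1.injOn (Finset.mem_coe.mpr hB) (Finset.mem_coe.mpr hB') heq)

lemma reading_inv {s : SkewShape} {n : ℕ} {τ T : ℕ × ℕ → Fin n} {π : Equiv.Perm (Fin n)}
    (hπ : IsReading s τ T π) {B : ℕ × ℕ} (hB : B ∈ s.cells) : π⁻¹ (T B) = τ B := by
  rw [← hπ B hB]; simp

lemma inv0_iff {s : SkewShape} {n : ℕ} {T τ₀ : ℕ × ℕ → Fin n} {π₀ : Equiv.Perm (Fin n)}
    (hT : IsSYT s n T) (h0 : IsTau0 s n τ₀) (hπ₀ : IsReading s τ₀ T π₀)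
    {A B : ℕ × ℕ} (hA : A ∈ s.cells) (hB : B ∈ s.cells) :
    (T B, T A) ∈ InvR π₀ ↔ T A < T B ∧ B.1 ≤ A.1 ∧ A.2 < B.2 := by
  constructor
  · rintro ⟨hab, hinv⟩
    have hτ : τ₀ B < τ₀ A := by
      rw [← reading_inv hπ₀ hA, ← reading_inv hπ₀ hB]; exact hinv
    have hne : B ≠ A := by rintro rfl; exact lt_irrefl _ hτ
    rcases (h0.2 B hB A hA hne).mp hτ with hlt | ⟨heq, hcol⟩
    · refine ⟨hab, le_of_lt hlt, ?_⟩
      by_contra hc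
      exact absurd (skew_nw_lt hT hB hA (le_of_lt hlt) (le_of_not_gt hc) hne) (asymm hab)
    · exact ⟨hab, le_of_eq heq, hcol⟩
  · rintro ⟨hab, hr, hc⟩
    have hne : B ≠ A := by rintro rfl; exact lt_irrefl _ hc
    refine ⟨hab, ?_⟩
    show π₀⁻¹ (T B) < π₀⁻¹ (T A)
    rw [reading_inv hπ₀ hA, reading_inv hπ₀ hB]
    refine (h0.2 B hB A hA hne).mpr ?_
    rcases lt_or_eq_of_le hr with h | h
    · exact Or.inl h
    · exact Or.inr ⟨h, hc⟩

lemma inv1_iff {s : SkewShape} {n : ℕ} {T τ₁ : ℕ × ℕ → Fin n} {π₁ : Equiv.Perm (Fin n)}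
    (hT : IsSYT s n T) (h1 : IsTau1 s n τ₁) (hπ₁ : IsReading s τ₁ T π₁)
    {A B : ℕ × ℕ} (hA : A ∈ s.cells) (hB : B ∈ s.cells) :
    (T B, T A) ∈ InvR π₁ ↔ T A < T B ∧ A.2 < B.2 := by
  constructor
  · rintro ⟨hab, hinv⟩
    have hτ : τ₁ B < τ₁ A := by
      rw [← reading_inv hπ₁ hA, ← reading_inv hπ₁ hB]; exact hinv
    have hne : B ≠ A := by rintro rfl; exact lt_irrefl _ hτ
    rcases (h1.2 B hB A hA hne).mp hτ with hlt | ⟨heq, hrow⟩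
    · exact ⟨hab, hlt⟩
    · exact absurd (skew_nw_lt hT hB hA (le_of_lt hrow) (le_of_eq heq) hne) (asymm hab)
  · rintro ⟨hab, hc⟩
    have hne : B ≠ A := by rintro rfl; exact lt_irrefl _ hc
    refine ⟨hab, ?_⟩
    show π₁⁻¹ (T B) < π₁⁻¹ (T A)
    rw [reading_inv hπ₁ hA, reading_inv hπ₁ hB]
    exact (h1.2 B hB A hA hne).mpr (Or.inl hc)

lemma dist_reading_between {s : SkewShape} {n : ℕ} {T τ₀ τ₁ : ℕ × ℕ → Fin n}
    {π₀ π₁ : Equiv.Perm (Fin n)}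
    (hT : IsSYT s n T) (h0 : IsTau0 s n τ₀) (h1 : IsTau1 s n τ₁)
    (hπ₀ : IsReading s τ₀ T π₀) (hπ₁ : IsReading s τ₁ T π₁)
    {τ : ℕ × ℕ → Fin n} {π : Equiv.Perm (Fin n)}
    (hd : IsDistinguished s n τ) (hπ : IsReading s τ T π) :
    rLE π₀ π ∧ rLE π π₁ := by
  have hbox : ∀ x : Fin n, ∃ B ∈ s.cells, T B = x := by
    intro x
    obtain ⟨B, hB, hTB⟩ := hT.1.surjOn (Set.mem_univ x)
    exact ⟨B, Finset.mem_coe.mp hB, hTB⟩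
  constructor
  · rintro ⟨b, a⟩ hp
    obtain ⟨A, hA, rfl⟩ := hbox a
    obtain ⟨B, hB, rfl⟩ := hbox b
    obtain ⟨hab, hr, hc⟩ := (inv0_iff hT h0 hπ₀ hA hB).mp hp
    have hne : B ≠ A := by rintro rfl; exact lt_irrefl _ hc
    have hτ : τ B < τ A :=
      lt_of_le_of_ne (hd.2 A hA B hB hr (le_of_lt hc))
        (fun h => hne (hd.1.1.injOn (Finset.mem_coe.mpr hB) (Finset.mem_coe.mpr hA) h))
    refine ⟨hab, ?_⟩
    show π⁻¹ (T B) < π⁻¹ (T A)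
    rw [reading_inv hπ hA, reading_inv hπ hB]
    exact hτ
  · rintro ⟨b, a⟩ hp
    obtain ⟨A, hA, rfl⟩ := hbox a
    obtain ⟨B, hB, rfl⟩ := hbox b
    obtain ⟨hab, hinv⟩ := hp
    have hτ : τ B < τ A := by
      rw [← reading_inv hπ hA, ← reading_inv hπ hB]; exact hinv
    have hne : B ≠ A := by rintro rfl; exact lt_irrefl _ hτ
    refine (inv1_iff hT h1 hπ₁ hA hB).mpr ⟨hab, ?_⟩
    by_contra hc
    rcases le_or_gt B.1 A.1 with hle | hlt
    · exact absurd (skew_nw_lt hT hB hA hle (le_of_not_gt hc) hne) (asymm hab)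
    · exact absurd (hd.2 B hB A hA (le_of_lt hlt) (le_of_not_gt hc)) (not_le.mpr hτ)

end ReadAux

/-- For a standard Young tableau `T` of shape `λ/μ` and a distinguished Schur labeling
`τ`, one has `read_{τ₀}(T) ≤_R read_τ(T) ≤_R read_{τ₁}(T)`; moreover the set of readings
of `T` with respect to distinguished Schur labelings is exactly the right weak Bruhat
interval `[read_{τ₀}(T), read_{τ₁}(T)]_R`. -/
theorem readings_fixed_T_interval (s : SkewShape) (n : ℕ) (T : ℕ × ℕ → Fin n)
    (hT : IsSYT s n T) (τ₀ τ₁ : ℕ × ℕ → Fin n) (h0 : IsTau0 s n τ₀) (h1 : IsTau1 s n τ₁)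
    (π₀ π₁ : Equiv.Perm (Fin n)) (hπ₀ : IsReading s τ₀ T π₀) (hπ₁ : IsReading s τ₁ T π₁) :
    (∀ (τ : ℕ × ℕ → Fin n) (π : Equiv.Perm (Fin n)),
      IsDistinguished s n τ → IsReading s τ T π → rLE π₀ π ∧ rLE π π₁) ∧
    {π : Equiv.Perm (Fin n) | ∃ τ : ℕ × ℕ → Fin n,
        IsDistinguished s n τ ∧ IsReading s τ T π} =
      {γ | rLE π₀ γ ∧ rLE γ π₁} := by
  have part1 : ∀ (τ : ℕ × ℕ → Fin n) (π : Equiv.Perm (Fin n)),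
      IsDistinguished s n τ → IsReading s τ T π → rLE π₀ π ∧ rLE π π₁ :=
    fun τ π hd hπ => dist_reading_between hT h0 h1 hπ₀ hπ₁ hd hπ
  refine ⟨part1, Set.Subset.antisymm ?_ ?_⟩
  · rintro π ⟨τ, hd, hπ⟩
    exact part1 τ π hd hπ
  · rintro γ ⟨hlo, hhi⟩
    refine ⟨fun B => γ⁻¹ (T B), ⟨⟨?_, ?_, ?_⟩, ?_⟩,
      fun B hB => Equiv.apply_symm_apply γ (T B)⟩
    · exact Set.BijOn.comp (Equiv.bijective γ⁻¹).bijOn_univ hT.1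
    · intro i j hij hij1
      have hmem : (T (i, j + 1), T (i, j)) ∈ InvR π₀ :=
        (inv0_iff hT h0 hπ₀ hij hij1).mpr ⟨hT.2.1 i j hij hij1, le_rfl, Nat.lt_succ_self j⟩
      exact (hlo hmem).2
    · intro i j hc1 hc2
      have hlt := hT.2.2 i j hc1 hc2
      rcases lt_or_ge (γ⁻¹ (T (i, j))) (γ⁻¹ (T (i + 1, j))) with h | h
      · exact h
      · exfalso
        have hne : γ⁻¹ (T (i + 1, j)) ≠ γ⁻¹ (T (i, j)) :=
          fun he => absurd (γ⁻¹.injective he) (ne_of_gt hlt)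
        have hmem : (T (i + 1, j), T (i, j)) ∈ InvR γ := ⟨hlt, lt_of_le_of_ne h hne⟩
        exact lt_irrefl j ((inv1_iff hT h1 hπ₁ hc1 hc2).mp (hhi hmem)).2
    · intro B hB B' hB' hr hc
      rcases eq_or_ne B B' with rfl | hne
      · exact le_rfl
      · rcases lt_trichotomy (T B) (T B') with hlt | heq | hgt
        · have hclt : B.2 < B'.2 := by
            rcases lt_or_eq_of_le hc with h | h
            · exact h
            · exact absurd (skew_nw_lt hT hB' hB hr (le_of_eq h.symm) (Ne.symm hne))
                (asymm hlt)
          have hmem := (inv0_iff hT h0 hπ₀ hB hB').mpr ⟨hlt, hr, hclt⟩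
          exact le_of_lt (hlo hmem).2
        · exact le_of_eq (congrArg (⇑γ⁻¹) heq.symm)
        · by_contra hcon
          have hmem : (T B, T B') ∈ InvR γ := ⟨hgt, lt_of_not_ge hcon⟩
          have := ((inv1_iff hT h1 hπ₁ hB' hB).mp (hhi hmem)).2
          exact absurd hc (not_le.mpr this)
end
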